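/- The formal power series quotient M(q)/Y(q), where M(q) = Σ_{n≥0} A_n q^n is the generating function of bi-leveled trees and Y(q) is the Catalan generating function, equals 1 + Σ_{n>0} (B_n - C_{n-1}) q^n, where B_n are defined by B_1 = 1 and B_n = Σ_{k=0}^{n-1} (k/(n-1))·binomial(2n-k-3, n-k-1)·C_k for n > 1. In particular, using 1/Y(q) = 1 - q·Y(q), M(q)/Y(q) has nonnegative coefficients if B_n ≥ C_{n-1} for all n ≥ 1. -/

import Mathlib

/-- Planar binary trees. -/
inductive PBTree : Type
  | leaf : PBTree
  | node : PBTree → PBTree → PBTree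
  deriving DecidableEq, Repr

namespace PBTree

instance : Inhabited PBTree := ⟨leaf⟩

/-- Number of internal nodes. -/
def size : PBTree → ℕ
  | leaf => 0
  | node l r => l.size + r.size + 1

/-- Number of leaves. -/
def nleaves : PBTree → ℕ
  | leaf => 1
  | node l r => l.nleaves + r.nleaves

end PBTree

/-- Planar binary trees with `Bool`-labelled internal nodes; a label `true` means the
node belongs to the distinguished upper order ideal.  Bi-leveled trees are the labelled
trees satisfying `isBL` below. -/
inductive LTree : Type
  | leaf : LTree
  | node : LTree → Bool → LTree → LTree
  deriving DecidableEq, Repr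

namespace LTree

instance : Inhabited LTree := ⟨leaf⟩

def size : LTree → ℕ
  | leaf => 0
  | node l _ r => l.size + r.size + 1

def nleaves : LTree → ℕ
  | leaf => 1
  | node l _ r => l.nleaves + r.nleaves

/-- Forget the labels. -/
def forget : LTree → PBTree
  | leaf => PBTree.leaf
  | node l _ r => PBTree.node l.forget r.forget

/-- All labels are `false`. -/
def allFalse : LTree → Bool
  | leaf => true
  | node l b r => !b && l.allFalse && r.allFalse

/-- The set of `true` nodes forms an upper order ideal of the node poset
(each node is below its parent; the root is maximal). -/
def isUpperIdeal : LTree → Bool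
  | leaf => true
  | node l b r => if b then l.isUpperIdeal && r.isUpperIdeal else l.allFalse && r.allFalse

/-- The leftmost node is labelled `true` and is a minimal element of the ideal,
i.e. its descendants are all labelled `false`.  (Vacuously true for the empty tree.) -/
def leftmostMin : LTree → Bool
  | leaf => true
  | node leaf b r => b && r.allFalse
  | node l _ _ => leftmostMin l

/-- `b` is a bi-leveled tree: the `true` nodes form an upper order ideal containing
the leftmost node as a minimal element. -/
def isBL (b : LTree) : Prop := b.isUpperIdeal = true ∧ b.leftmostMin = true

end LTree

/-- The number of bi-leveled trees with `n` (internal) nodes. -/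
noncomputable def blCount (n : ℕ) : ℕ :=
  {b : LTree | LTree.isBL b ∧ b.size = n}.ncard

open PowerSeries

/-- Composition of formal power series (valid when `g` has zero constant term):
the `N`-th coefficient of `f ∘ g` is `∑_{n ≤ N} f_n · [q^N](g^n)`. -/
noncomputable def psComp (f g : PowerSeries ℚ) : PowerSeries ℚ :=
  PowerSeries.mk fun N => ∑ n ∈ Finset.range (N + 1),
    (PowerSeries.coeff n f) * PowerSeries.coeff N (g ^ n)

/-- The Catalan generating function `Y(q) = ∑ C_n q^n`. -/
noncomputable def Yser : PowerSeries ℚ := PowerSeries.mk fun n => (catalan n : ℚ)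

/-- The generating function `M(q) = ∑ A_n q^n` of bi-leveled trees. -/
noncomputable def Mser : PowerSeries ℚ := PowerSeries.mk fun n => (blCount n : ℚ)

/-- The numbers `B n`: `B 1 = 1` and for `n > 1`,
`B n = ∑_{k=0}^{n-1} (k/(n-1)) · C(2n-k-3, n-k-1) · C_k`. -/
noncomputable def Bnum : ℕ → ℚ := fun n =>
  if n = 1 then 1
  else if 2 ≤ n then
    ∑ k ∈ Finset.range n,
      ((k : ℚ) / ((n : ℚ) - 1)) * (Nat.choose (2 * n - k - 3) (n - k - 1) : ℚ) * (catalan k : ℚ)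
  else 0
namespace LTree

open Finset

/-- Trees `node l bo r` with `l ∈ a`, `r ∈ c`. -/
abbrev pairNode (bo : Bool) (a c : Finset LTree) : Finset LTree :=
  (a ×ˢ c).map ⟨fun x => node x.1 bo x.2, fun ⟨x₁, x₂⟩ ⟨y₁, y₂⟩ h => by simpa using h⟩

theorem mem_pairNode {x : LTree} {bo : Bool} {a c : Finset LTree} :
    x ∈ pairNode bo a c ↔ ∃ l r, l ∈ a ∧ r ∈ c ∧ x = node l bo r := by
  simp only [pairNode, mem_map, mem_product, Function.Embedding.coeFn_mk, Prod.exists]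
  constructor
  · rintro ⟨l, r, ⟨hl, hr⟩, rfl⟩; exact ⟨l, r, hl, hr, rfl⟩
  · rintro ⟨l, r, hl, hr, rfl⟩; exact ⟨l, r, ⟨hl, hr⟩, rfl⟩

/-- The finset of all labelled trees of size `n`. -/
def ltreesOfSize : ℕ → Finset LTree
  | 0 => {leaf}
  | n + 1 =>
    (antidiagonal n).attach.biUnion fun ijh =>
      pairNode true (ltreesOfSize ijh.1.1) (ltreesOfSize ijh.1.2) ∪
      pairNode false (ltreesOfSize ijh.1.1) (ltreesOfSize ijh.1.2)
  decreasing_by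
    all_goals simp_wf
    all_goals first
      | (have := Finset.HasAntidiagonal.antidiagonal.fst_le ijh.2; omega)
      | (have := Finset.HasAntidiagonal.antidiagonal.snd_le ijh.2; omega)

@[simp] theorem ltreesOfSize_zero : ltreesOfSize 0 = {leaf} := by rw [ltreesOfSize]

theorem ltreesOfSize_succ (n : ℕ) :
    ltreesOfSize (n + 1) =
      (antidiagonal n).biUnion fun ij =>
        pairNode true (ltreesOfSize ij.1) (ltreesOfSize ij.2) ∪
        pairNode false (ltreesOfSize ij.1) (ltreesOfSize ij.2) := by
  rw [ltreesOfSize]; ext; simp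

@[simp] theorem mem_ltreesOfSize {x : LTree} {n : ℕ} :
    x ∈ ltreesOfSize n ↔ x.size = n := by
  induction x generalizing n with
  | leaf =>
    cases n with
    | zero => simp [size]
    | succ n =>
      simp only [ltreesOfSize_succ, mem_biUnion, mem_union, mem_pairNode, size]
      constructor
      · rintro ⟨ij, _, (⟨l, r, _, _, h⟩ | ⟨l, r, _, _, h⟩)⟩ <;> exact absurd h (by simp)
      · omega
  | node l b r ihl ihr =>
    cases n with
    | zero => simp [size]
    | succ n =>
      simp only [ltreesOfSize_succ, mem_biUnion, mem_union, mem_pairNode, size, HasAntidiagonal.mem_antidiagonal]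
      constructor
      · rintro ⟨ij, hij, (⟨l', r', hl, hr, h⟩ | ⟨l', r', hl, hr, h⟩)⟩ <;>
          (cases h; rw [ihl] at hl; rw [ihr] at hr; omega)
      · intro h
        refine ⟨(l.size, r.size), by omega, ?_⟩
        cases b
        · exact Or.inr ⟨l, r, ihl.2 rfl, ihr.2 rfl, rfl⟩
        · exact Or.inl ⟨l, r, ihl.2 rfl, ihr.2 rfl, rfl⟩

end LTree
namespace LTree
open Finset

theorem isUpperIdeal_of_allFalse : ∀ {t : LTree}, t.allFalse = true → t.isUpperIdeal = true
  | leaf, _ => rfl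
  | node l b r, h => by
    simp only [allFalse, Bool.and_eq_true, Bool.not_eq_true'] at h
    simp [isUpperIdeal, h.1.1, h.1.2, h.2]

theorem leftmostMin_of_allFalse : ∀ {t : LTree}, t ≠ leaf → t.allFalse = true →
    t.leftmostMin = false
  | leaf, h, _ => absurd rfl h
  | node l b r, _, h => by
    simp only [allFalse, Bool.and_eq_true, Bool.not_eq_true'] at h
    cases l with
    | leaf => simp [leftmostMin, h.1.1]
    | node l1 b1 r1 =>
      simpa [leftmostMin] using leftmostMin_of_allFalse (by simp) h.1.2

theorem isBL_node_leaf {b : Bool} {r : LTree} :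
    ((node leaf b r).isUpperIdeal = true ∧ (node leaf b r).leftmostMin = true) ↔
      (b = true ∧ r.allFalse = true) := by
  constructor
  · rintro ⟨hU, hL⟩
    simp only [leftmostMin, Bool.and_eq_true] at hL
    exact ⟨hL.1, hL.2⟩
  · rintro ⟨rfl, hF⟩
    refine ⟨?_, by simp [leftmostMin, hF]⟩
    simp [isUpperIdeal, isUpperIdeal_of_allFalse hF]

theorem isUpperIdeal_node (l : LTree) (b : Bool) (r : LTree) :
    (node l b r).isUpperIdeal =
      if b then l.isUpperIdeal && r.isUpperIdeal else l.allFalse && r.allFalse := rfl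

theorem isBL_node_node {l1 : LTree} {b1 : Bool} {r1 : LTree} {b : Bool} {r : LTree} :
    ((node (node l1 b1 r1) b r).isUpperIdeal = true ∧
        (node (node l1 b1 r1) b r).leftmostMin = true) ↔
      (b = true ∧ ((node l1 b1 r1).isUpperIdeal = true ∧ (node l1 b1 r1).leftmostMin = true) ∧
        r.isUpperIdeal = true) := by
  have hL : (node (node l1 b1 r1) b r).leftmostMin = (node l1 b1 r1).leftmostMin := by
    simp [leftmostMin]
  constructor
  · rintro ⟨hU, hLm⟩
    rw [hL] at hLm
    rw [isUpperIdeal_node] at hU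
    cases b with
    | false =>
      rw [if_neg (by simp)] at hU
      rw [Bool.and_eq_true] at hU
      exact absurd hLm (by simp [leftmostMin_of_allFalse (show (node l1 b1 r1) ≠ leaf by simp) hU.1])
    | true =>
      rw [if_pos rfl, Bool.and_eq_true] at hU
      exact ⟨rfl, ⟨hU.1, hLm⟩, hU.2⟩
  · rintro ⟨rfl, ⟨hU, hLm⟩, hr⟩
    refine ⟨?_, by rw [hL]; exact hLm⟩
    rw [isUpperIdeal_node, if_pos rfl, Bool.and_eq_true]
    exact ⟨hU, hr⟩

end LTree
namespace LTree
open Finset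

theorem card_pairNode (bo : Bool) (a c : Finset LTree) :
    (pairNode bo a c).card = a.card * c.card := by
  simp [pairNode]

theorem disjoint_pairNode (a c a' c' : Finset LTree) :
    Disjoint (pairNode true a c) (pairNode false a' c') := by
  rw [disjoint_left]
  intro t ht ht'
  rw [mem_pairNode] at ht ht'
  obtain ⟨l, r, -, -, rfl⟩ := ht
  obtain ⟨l', r', -, -, h⟩ := ht'
  exact absurd h (by simp)

theorem card_filter_ltreesOfSize_succ (P : LTree → Prop) [DecidablePred P] (n : ℕ) :
    ((ltreesOfSize (n + 1)).filter P).card =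
      ∑ ij ∈ antidiagonal n,
        ((pairNode true (ltreesOfSize ij.1) (ltreesOfSize ij.2) ∪
          pairNode false (ltreesOfSize ij.1) (ltreesOfSize ij.2)).filter P).card := by
  rw [ltreesOfSize_succ, filter_biUnion, card_biUnion]
  intro x hx y hy hxy
  simp only [Function.onFun]
  rw [disjoint_left]
  intro t ht ht'
  rw [mem_filter] at ht ht'
  have hx' := ht.1
  have hy' := ht'.1
  rw [mem_union] at hx' hy'
  have key : ∀ {z : ℕ × ℕ},
      t ∈ pairNode true (ltreesOfSize z.1) (ltreesOfSize z.2) ∪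
        pairNode false (ltreesOfSize z.1) (ltreesOfSize z.2) →
      ∃ l b r, t = node l b r ∧ l.size = z.1 ∧ r.size = z.2 := by
    intro z hz
    rw [mem_union, mem_pairNode, mem_pairNode] at hz
    rcases hz with ⟨l, r, hl, hr, rfl⟩ | ⟨l, r, hl, hr, rfl⟩ <;>
      rw [mem_ltreesOfSize] at hl hr <;> exact ⟨l, _, r, rfl, hl, hr⟩
  obtain ⟨l, b, r, rfl, h1, h2⟩ := key ht.1
  obtain ⟨l', b', r', he, h1', h2'⟩ := key ht'.1
  rw [node.injEq] at he
  apply hxy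
  have : l = l' ∧ r = r' := ⟨he.1, he.2.2⟩
  obtain ⟨rfl, rfl⟩ := this
  exact Prod.ext (h1 ▸ h1') (h2 ▸ h2')

def cntF (n : ℕ) : ℕ := ((ltreesOfSize n).filter fun t => t.allFalse = true).card
def cntU (n : ℕ) : ℕ := ((ltreesOfSize n).filter fun t => t.isUpperIdeal = true).card
def cntM (n : ℕ) : ℕ :=
  ((ltreesOfSize n).filter fun t => t.isUpperIdeal = true ∧ t.leftmostMin = true).card

theorem allFalse_node (l : LTree) (b : Bool) (r : LTree) :
    (node l b r).allFalse = (!b && l.allFalse && r.allFalse) := rfl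

theorem filter_allFalse_true (a c : Finset LTree) :
    (pairNode true a c).filter (fun t => t.allFalse = true) = ∅ := by
  ext t
  simp only [mem_filter, mem_pairNode, notMem_empty, iff_false, not_and]
  rintro ⟨l, r, hl, hr, rfl⟩
  simp [allFalse_node]

theorem filter_allFalse_false (a c : Finset LTree) :
    (pairNode false a c).filter (fun t => t.allFalse = true) =
      pairNode false (a.filter fun t => t.allFalse = true)
        (c.filter fun t => t.allFalse = true) := by
  ext t
  simp only [mem_filter, mem_pairNode]
  constructor
  · rintro ⟨⟨l, r, hl, hr, rfl⟩, h⟩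
    rw [allFalse_node] at h
    simp only [Bool.not_false, Bool.true_and, Bool.and_eq_true] at h
    exact ⟨l, r, ⟨hl, h.1⟩, ⟨hr, h.2⟩, rfl⟩
  · rintro ⟨l, r, ⟨hl, h1⟩, ⟨hr, h2⟩, rfl⟩
    exact ⟨⟨l, r, hl, hr, rfl⟩, by simp [allFalse_node, h1, h2]⟩

theorem cntF_succ (n : ℕ) :
    cntF (n + 1) = ∑ ij ∈ antidiagonal n, cntF ij.1 * cntF ij.2 := by
  rw [cntF, card_filter_ltreesOfSize_succ]
  refine sum_congr rfl fun ij _ => ?_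
  rw [filter_union, filter_allFalse_true, filter_allFalse_false, empty_union, card_pairNode]
  rfl

theorem cntF_eq_catalan : ∀ n, cntF n = catalan n := by
  intro n
  induction n using Nat.strong_induction_on with
  | _ n ih =>
    match n with
    | 0 => rw [cntF]; simp [filter_singleton, allFalse]
    | n + 1 =>
      rw [cntF_succ, catalan_succ']
      refine sum_congr rfl fun ij hij => ?_
      have h1 := Finset.HasAntidiagonal.antidiagonal.fst_le hij
      have h2 := Finset.HasAntidiagonal.antidiagonal.snd_le hij
      rw [ih _ (by omega), ih _ (by omega)]

end LTree
namespace LTree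
open Finset

theorem filter_upper_true (a c : Finset LTree) :
    (pairNode true a c).filter (fun t => t.isUpperIdeal = true) =
      pairNode true (a.filter fun t => t.isUpperIdeal = true)
        (c.filter fun t => t.isUpperIdeal = true) := by
  ext t
  simp only [mem_filter, mem_pairNode]
  constructor
  · rintro ⟨⟨l, r, hl, hr, rfl⟩, h⟩
    rw [isUpperIdeal_node, if_pos rfl, Bool.and_eq_true] at h
    exact ⟨l, r, ⟨hl, h.1⟩, ⟨hr, h.2⟩, rfl⟩
  · rintro ⟨l, r, ⟨hl, h1⟩, ⟨hr, h2⟩, rfl⟩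
    refine ⟨⟨l, r, hl, hr, rfl⟩, ?_⟩
    rw [isUpperIdeal_node, if_pos rfl, Bool.and_eq_true]
    exact ⟨h1, h2⟩

theorem filter_upper_false (a c : Finset LTree) :
    (pairNode false a c).filter (fun t => t.isUpperIdeal = true) =
      pairNode false (a.filter fun t => t.allFalse = true)
        (c.filter fun t => t.allFalse = true) := by
  ext t
  simp only [mem_filter, mem_pairNode]
  constructor
  · rintro ⟨⟨l, r, hl, hr, rfl⟩, h⟩
    rw [isUpperIdeal_node, if_neg (by simp), Bool.and_eq_true] at h
    exact ⟨l, r, ⟨hl, h.1⟩, ⟨hr, h.2⟩, rfl⟩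
  · rintro ⟨l, r, ⟨hl, h1⟩, ⟨hr, h2⟩, rfl⟩
    refine ⟨⟨l, r, hl, hr, rfl⟩, ?_⟩
    rw [isUpperIdeal_node, if_neg (by simp), Bool.and_eq_true]
    exact ⟨h1, h2⟩

theorem cntU_succ (n : ℕ) :
    cntU (n + 1) = ∑ ij ∈ antidiagonal n, (cntU ij.1 * cntU ij.2 + cntF ij.1 * cntF ij.2) := by
  rw [cntU, card_filter_ltreesOfSize_succ]
  refine sum_congr rfl fun ij _ => ?_
  rw [filter_union, filter_upper_true, filter_upper_false,
    card_union_of_disjoint (disjoint_pairNode _ _ _ _), card_pairNode, card_pairNode]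
  rfl

theorem filter_BL_false (a c : Finset LTree) :
    (pairNode false a c).filter
        (fun t => t.isUpperIdeal = true ∧ t.leftmostMin = true) = ∅ := by
  ext t
  simp only [mem_filter, mem_pairNode, notMem_empty, iff_false, not_and]
  rintro ⟨l, r, hl, hr, rfl⟩ hU
  rw [isUpperIdeal_node, if_neg (by simp), Bool.and_eq_true] at hU
  cases l with
  | leaf => simp [leftmostMin]
  | node l1 b1 r1 =>
    have := leftmostMin_of_allFalse (show node l1 b1 r1 ≠ leaf by simp) hU.1
    simp only [leftmostMin] at this ⊢
    simp [this]

theorem filter_BL_true_zero (c : Finset LTree) :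
    (pairNode true {leaf} c).filter
        (fun t => t.isUpperIdeal = true ∧ t.leftmostMin = true) =
      pairNode true {leaf} (c.filter fun t => t.allFalse = true) := by
  ext t
  simp only [mem_filter, mem_pairNode, mem_singleton]
  constructor
  · rintro ⟨⟨l, r, rfl, hr, rfl⟩, h⟩
    exact ⟨leaf, r, rfl, ⟨hr, (isBL_node_leaf.1 h).2⟩, rfl⟩
  · rintro ⟨l, r, rfl, ⟨hr, h⟩, rfl⟩
    exact ⟨⟨leaf, r, rfl, hr, rfl⟩, isBL_node_leaf.2 ⟨rfl, h⟩⟩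

theorem filter_BL_true_pos (a c : Finset LTree) (ha : ∀ l ∈ a, l ≠ leaf) :
    (pairNode true a c).filter
        (fun t => t.isUpperIdeal = true ∧ t.leftmostMin = true) =
      pairNode true (a.filter fun t => t.isUpperIdeal = true ∧ t.leftmostMin = true)
        (c.filter fun t => t.isUpperIdeal = true) := by
  ext t
  simp only [mem_filter, mem_pairNode]
  constructor
  · rintro ⟨⟨l, r, hl, hr, rfl⟩, h⟩
    obtain ⟨l1, b1, r1, rfl⟩ : ∃ l1 b1 r1, l = node l1 b1 r1 := by
      cases l with
      | leaf => exact absurd rfl (ha _ hl)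
      | node l1 b1 r1 => exact ⟨l1, b1, r1, rfl⟩
    obtain ⟨-, hBL, hU⟩ := isBL_node_node.1 h
    exact ⟨_, r, ⟨hl, hBL⟩, ⟨hr, hU⟩, rfl⟩
  · rintro ⟨l, r, ⟨hl, hBL⟩, ⟨hr, hU⟩, rfl⟩
    obtain ⟨l1, b1, r1, rfl⟩ : ∃ l1 b1 r1, l = node l1 b1 r1 := by
      cases l with
      | leaf => exact absurd rfl (ha _ hl)
      | node l1 b1 r1 => exact ⟨l1, b1, r1, rfl⟩
    exact ⟨⟨_, r, hl, hr, rfl⟩, isBL_node_node.2 ⟨rfl, hBL, hU⟩⟩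

theorem cntM_succ (n : ℕ) :
    cntM (n + 1) = ∑ ij ∈ antidiagonal n,
      (if ij.1 = 0 then cntF ij.2 else cntM ij.1 * cntU ij.2) := by
  rw [cntM, card_filter_ltreesOfSize_succ]
  refine sum_congr rfl fun ij _ => ?_
  rw [filter_union, filter_BL_false, union_empty]
  rcases Nat.eq_zero_or_pos ij.1 with h0 | hpos
  · rw [if_pos h0, h0, ltreesOfSize_zero, filter_BL_true_zero, card_pairNode, card_singleton,
      one_mul]
    rfl
  · rw [if_neg (by omega)]
    rw [filter_BL_true_pos _ _ (fun l hl => ?_), card_pairNode]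
    · rfl
    · rw [mem_ltreesOfSize] at hl
      intro hleaf
      subst hleaf
      simp only [size] at hl
      omega

theorem blCount_eq_cntM (n : ℕ) : blCount n = cntM n := by
  rw [blCount, cntM]
  rw [show {b : LTree | LTree.isBL b ∧ b.size = n} =
      ↑((ltreesOfSize n).filter fun t => t.isUpperIdeal = true ∧ t.leftmostMin = true) from ?_]
  · rw [Set.ncard_coe_finset]
  · ext t
    simp only [Set.mem_setOf_eq, coe_filter, mem_ltreesOfSize, isBL]
    tauto

end LTree
open PowerSeries Finset

@[simp] theorem coeff_Yser (n : ℕ) : coeff n Yser = (catalan n : ℚ) := by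
  simp [Yser]

theorem constantCoeff_Yser : constantCoeff Yser = 1 := by
  rw [← coeff_zero_eq_constantCoeff]; simp [Yser]

theorem Yser_eq : Yser = 1 + X * Yser ^ 2 := by
  ext n
  cases n with
  | zero => simp [coeff_zero_eq_constantCoeff, constantCoeff_Yser]
  | succ n =>
    rw [map_add, coeff_succ_X_mul, coeff_Yser, catalan_succ']
    have : coeff n (Yser ^ 2) = ∑ ij ∈ antidiagonal n, (catalan ij.1 : ℚ) * catalan ij.2 := by
      rw [sq, coeff_mul]
      exact sum_congr rfl fun ij _ => by simp
    rw [this, coeff_one, if_neg (Nat.succ_ne_zero n)]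
    push_cast
    ring

theorem Yser_inv : Yser⁻¹ = 1 - X * Yser := by
  rw [inv_eq_iff_mul_eq_one (by rw [constantCoeff_Yser]; norm_num)]
  linear_combination Yser_eq

/-- coefficients of powers of the Catalan series -/
noncomputable def cY (m k : ℕ) : ℚ := coeff m (Yser ^ k)

theorem cY_zero_left (k : ℕ) : cY 0 k = 1 := by
  rw [cY, coeff_zero_eq_constantCoeff, map_pow, constantCoeff_Yser, one_pow]

theorem cY_zero_right (m : ℕ) : cY m 0 = if m = 0 then 1 else 0 := by
  rw [cY, pow_zero, coeff_one]

theorem cY_rec (m k : ℕ) : cY (m + 1) (k + 1) = cY (m + 1) k + cY m (k + 2) := by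
  have h : Yser ^ (k + 1) = Yser ^ k + X * Yser ^ (k + 2) := by
    calc Yser ^ (k+1) = Yser ^ k * Yser := by ring
    _ = Yser ^ k * (1 + X * Yser ^ 2) := by rw [← Yser_eq]
    _ = Yser ^ k + X * Yser ^ (k + 2) := by ring
  rw [cY, h, map_add, coeff_succ_X_mul]
  rfl
/-- Ballot-type closed form for the coefficients of powers of the Catalan series. -/
noncomputable def fq (m k : ℕ) : ℚ :=
  if k = 0 then (if m = 0 then 1 else 0)
  else (k : ℚ) / (2 * m + k) * ((2 * m + k).choose m : ℚ)

theorem fq_id (m k : ℕ) : fq (m + 1) (k + 1) = fq (m + 1) k + fq m (k + 2) := by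
  rcases Nat.eq_zero_or_pos k with rfl | hk
  · have h := Nat.add_one_mul_choose_eq (2 * m + 2) m
    -- (2m+2)+1) * choose (2m+2) m = choose (2m+3) (m+1) * (m+1)
    have e1 : 2 * (m + 1) + 1 = 2 * m + 3 := by ring
    have e2 : 2 * (m + 1) = 2 * m + 2 := by ring
    simp only [fq, if_neg (Nat.succ_ne_zero 0), if_neg (Nat.succ_ne_zero 1),
      if_pos rfl, if_neg (Nat.succ_ne_zero m), e1, e2]
    have hc : ((2 * m + 2 + 1 : ℕ) : ℚ) * ((2 * m + 2).choose m : ℚ) =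
        ((2 * m + 2 + 1).choose (m + 1) : ℚ) * ((m + 1 : ℕ) : ℚ) := by
      exact_mod_cast congrArg (Nat.cast : ℕ → ℚ) h
    push_cast at hc ⊢
    have d1 : (2 * (m:ℚ) + 3) ≠ 0 := by positivity
    have d2 : (2 * (m:ℚ) + 2) ≠ 0 := by positivity
    field_simp
    linear_combination (-1 : ℚ) * hc
  · obtain ⟨j, rfl⟩ := Nat.exists_eq_add_of_le hk
    set k := 1 + j with hkj
    have hpas : ((2 * m + k + 3).choose (m + 1) : ℚ) =
        ((2 * m + k + 2).choose m : ℚ) + ((2 * m + k + 2).choose (m + 1) : ℚ) := by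
      exact_mod_cast congrArg (Nat.cast : ℕ → ℚ) (Nat.choose_succ_succ (2 * m + k + 2) m)
    have hrat : ((2 * m + k + 2).choose (m + 1) : ℚ) * ((m + 1 : ℕ) : ℚ) =
        ((2 * m + k + 2).choose m : ℚ) * ((m + k + 2 : ℕ) : ℚ) := by
      have h := Nat.choose_succ_right_eq (2 * m + k + 2) m
      have : 2 * m + k + 2 - m = m + k + 2 := by omega
      rw [this] at h
      exact_mod_cast congrArg (Nat.cast : ℕ → ℚ) h
    have e1 : 2 * (m + 1) + (k + 1) = 2 * m + k + 3 := by ring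
    have e2 : 2 * (m + 1) + k = 2 * m + k + 2 := by ring
    have e3 : 2 * m + (k + 2) = 2 * m + k + 2 := by ring
    have hk1 : k + 1 ≠ 0 := Nat.succ_ne_zero k
    have hk0 : k ≠ 0 := by omega
    have hk2 : k + 2 ≠ 0 := by omega
    simp only [fq, if_neg hk1, if_neg hk0, if_neg hk2, e1, e2, e3]
    push_cast at hpas hrat ⊢
    have d1 : (2 * (m:ℚ) + (k:ℚ) + 3) ≠ 0 := by positivity
    have d2 : (2 * (m:ℚ) + (k:ℚ) + 2) ≠ 0 := by positivity
    field_simp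
    linear_combination ((k:ℚ)^3 + 4*(k:ℚ)^2*(m:ℚ) + 5*(k:ℚ)^2 + 4*(k:ℚ)*(m:ℚ)^2 + 12*(k:ℚ)*(m:ℚ) + 8*(k:ℚ) + 4*(m:ℚ)^2 + 8*(m:ℚ) + 4) * hpas + (2*(k:ℚ) + 4*(m:ℚ) + 4) * hrat

theorem cY_eq_fq : ∀ m k, cY m k = fq m k := by
  intro m
  induction m with
  | zero =>
    intro k
    rw [cY_zero_left]
    rcases Nat.eq_zero_or_pos k with rfl | hk
    · simp [fq]
    · have hk0 : k ≠ 0 := by omega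
      have : ((k : ℚ)) ≠ 0 := by exact_mod_cast hk0
      simp [fq, hk0, this]
  | succ m ihm =>
    intro k
    induction k with
    | zero => rw [cY_zero_right, fq]; simp
    | succ k ihk => rw [cY_rec, ihk, ihm (k + 2), fq_id]
noncomputable def wq (n : ℕ) : ℚ := ∑ k ∈ range (n + 1), (catalan k : ℚ) * cY (n - k) k

noncomputable def Wser : ℚ⟦X⟧ := PowerSeries.mk wq

noncomputable def Wpart (N : ℕ) : ℚ⟦X⟧ :=
  ∑ k ∈ range (N + 1), PowerSeries.C (catalan k : ℚ) * (X * Yser) ^ k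

theorem coeff_XY_pow (n k : ℕ) :
    coeff n ((X * Yser) ^ k) = if k ≤ n then cY (n - k) k else 0 := by
  rw [mul_pow, coeff_X_pow_mul']
  rfl

theorem coeff_Wpart {n N : ℕ} (h : n ≤ N) : coeff n (Wpart N) = wq n := by
  rw [Wpart, map_sum, wq]
  rw [← sum_subset (show range (n + 1) ⊆ range (N + 1) by
    exact range_subset_range.2 (by omega))]
  · refine sum_congr rfl fun k hk => ?_
    rw [mem_range] at hk
    rw [coeff_C_mul, coeff_XY_pow, if_pos (by omega)]
  · intro k hk hk'
    rw [mem_range] at hk hk'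
    rw [coeff_C_mul, coeff_XY_pow, if_neg (by omega), mul_zero]

theorem coeff_mul_congr_right (n : ℕ) (g f f' : ℚ⟦X⟧)
    (h : ∀ i, i ≤ n → coeff i f = coeff i f') :
    coeff n (g * f) = coeff n (g * f') := by
  rw [PowerSeries.coeff_mul, PowerSeries.coeff_mul]
  refine sum_congr rfl fun ij hij => ?_
  rw [HasAntidiagonal.mem_antidiagonal] at hij
  rw [h ij.2 (by omega)]

theorem coeff_WW {i n : ℕ} (h : i ≤ n) :
    coeff i (Wser * Wser) = coeff i (Wpart n * Wpart n) := by
  have hW : ∀ j, j ≤ i → coeff j Wser = coeff j (Wpart n) := fun j hj => by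
    rw [Wser, coeff_mk, coeff_Wpart (by omega)]
  rw [coeff_mul_congr_right i Wser _ _ hW, mul_comm Wser (Wpart n),
    coeff_mul_congr_right i (Wpart n) _ _ hW]

theorem double_sum (N : ℕ) (F : ℕ → ℕ → ℚ) (hF : ∀ k l, N < k + l → F k l = 0) :
    ∑ k ∈ range (N + 1), ∑ l ∈ range (N + 1), F k l
      = ∑ s ∈ range (N + 1), ∑ p ∈ antidiagonal s, F p.1 p.2 := by
  have hdisj : Set.PairwiseDisjoint ↑(range (N + 1)) (antidiagonal : ℕ → Finset (ℕ × ℕ)) := by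
    intro x _ y _ hxy
    simp only [Function.onFun]
    refine Finset.disjoint_left.2 fun p hp hp' => ?_
    rw [HasAntidiagonal.mem_antidiagonal] at hp hp'
    omega
  rw [← Finset.sum_product', ← Finset.sum_biUnion hdisj]
  refine (Finset.sum_subset ?_ ?_).symm
  · intro p hp
    rw [mem_biUnion] at hp
    obtain ⟨s, hs, hps⟩ := hp
    rw [mem_range] at hs
    rw [HasAntidiagonal.mem_antidiagonal] at hps
    rw [mem_product, mem_range, mem_range]
    omega
  · intro p hp hp'
    rw [mem_product, mem_range, mem_range] at hp
    rw [mem_biUnion] at hp'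
    apply hF
    by_contra hc
    exact hp' ⟨p.1 + p.2, mem_range.2 (by omega), HasAntidiagonal.mem_antidiagonal.2 rfl⟩

theorem wq_zero : wq 0 = 1 := by
  rw [wq]
  simp [cY_zero_left]

theorem Wser_eq : Wser = 1 + X * (Yser * (Wser * Wser)) := by
  ext n
  cases n with
  | zero =>
    have h1 : coeff 0 Wser = 1 := by rw [Wser, coeff_mk, wq_zero]
    have h2 : coeff 0 (X * (Yser * (Wser * Wser))) = 0 := by
      rw [coeff_zero_eq_constantCoeff, map_mul, constantCoeff_X, zero_mul]
    rw [map_add, h1, h2, add_zero, coeff_one, if_pos rfl]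
  | succ n =>
    rw [map_add, coeff_succ_X_mul, coeff_one, if_neg (Nat.succ_ne_zero n), zero_add]
    rw [coeff_mul_congr_right n Yser _ _ (fun i hi => coeff_WW hi)]
    have term : ∀ (a b : ℚ) (k l : ℕ),
        Yser * (PowerSeries.C a * (X * Yser) ^ k * (PowerSeries.C b * (X * Yser) ^ l)) =
          PowerSeries.C (a * b) * (X ^ (k + l) * Yser ^ (k + l + 1)) := by
      intros a b k l
      rw [map_mul]
      ring
    have expand : Yser * (Wpart n * Wpart n) =
        ∑ k ∈ range (n + 1), ∑ l ∈ range (n + 1),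
          PowerSeries.C ((catalan k : ℚ) * catalan l) * (X ^ (k + l) * Yser ^ (k + l + 1)) := by
      rw [Wpart, sum_mul_sum]
      rw [Finset.mul_sum]
      refine sum_congr rfl fun k _ => ?_
      rw [Finset.mul_sum]
      exact sum_congr rfl fun l _ => term _ _ k l
    rw [expand]
    rw [map_sum]
    symm
    have hco : ∀ k l : ℕ, coeff n
        (PowerSeries.C ((catalan k : ℚ) * catalan l) * (X ^ (k + l) * Yser ^ (k + l + 1))) =
        (catalan k : ℚ) * catalan l *
          (if k + l ≤ n then cY (n - (k + l)) (k + l + 1) else 0) := by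
      intro k l
      rw [coeff_C_mul, coeff_X_pow_mul']
      rfl
    calc (∑ k ∈ range (n + 1), coeff n (∑ l ∈ range (n + 1),
            PowerSeries.C ((catalan k : ℚ) * catalan l) * (X ^ (k + l) * Yser ^ (k + l + 1))))
        = ∑ k ∈ range (n + 1), ∑ l ∈ range (n + 1), (catalan k : ℚ) * catalan l *
            (if k + l ≤ n then cY (n - (k + l)) (k + l + 1) else 0) := by
          refine sum_congr rfl fun k _ => ?_
          rw [map_sum]
          exact sum_congr rfl fun l _ => hco k l
      _ = ∑ s ∈ range (n + 1), ∑ p ∈ antidiagonal s, (catalan p.1 : ℚ) * catalan p.2 *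
            (if p.1 + p.2 ≤ n then cY (n - (p.1 + p.2)) (p.1 + p.2 + 1) else 0) := by
          refine double_sum n _ fun k l h => ?_
          rw [if_neg (by omega), mul_zero]
      _ = ∑ s ∈ range (n + 1), (catalan (s + 1) : ℚ) * cY (n - s) (s + 1) := by
          refine sum_congr rfl fun s hs => ?_
          rw [mem_range] at hs
          have : ∀ p ∈ antidiagonal s, (catalan p.1 : ℚ) * catalan p.2 *
              (if p.1 + p.2 ≤ n then cY (n - (p.1 + p.2)) (p.1 + p.2 + 1) else 0) =
              ((catalan p.1 : ℚ) * catalan p.2) * cY (n - s) (s + 1) := by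
            intro p hp
            rw [HasAntidiagonal.mem_antidiagonal] at hp
            rw [hp, if_pos (by omega)]
          rw [sum_congr rfl this, ← Finset.sum_mul]
          congr 1
          rw [catalan_succ']
          push_cast
          rfl
      _ = coeff (n + 1) Wser := by
          rw [Wser, coeff_mk, wq,
            Finset.sum_range_succ' (fun k => (catalan k : ℚ) * cY (n + 1 - k) k) (n + 1)]
          have h0 : (catalan 0 : ℚ) * cY (n + 1 - 0) 0 = 0 := by
            rw [cY_zero_right, if_neg (by omega), mul_zero]
          rw [h0, add_zero]
          refine (sum_congr rfl fun k hk => ?_).symm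
          rw [show n + 1 - (k + 1) = n - k from by omega]

noncomputable def User : ℚ⟦X⟧ := PowerSeries.mk fun n => (LTree.cntU n : ℚ)

theorem cntU_zero : LTree.cntU 0 = 1 := by
  rw [LTree.cntU, LTree.ltreesOfSize_zero, filter_singleton,
    if_pos (show LTree.leaf.isUpperIdeal = true from rfl), card_singleton]

theorem cntM_zero : LTree.cntM 0 = 1 := by
  rw [LTree.cntM, LTree.ltreesOfSize_zero, filter_singleton,
    if_pos (show LTree.leaf.isUpperIdeal = true ∧ LTree.leaf.leftmostMin = true from ⟨rfl, rfl⟩),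
    card_singleton]

theorem User_eq : User = 1 + X * User ^ 2 + X * Yser ^ 2 := by
  ext n
  cases n with
  | zero =>
    have h1 : coeff 0 User = 1 := by rw [User, coeff_mk, cntU_zero, Nat.cast_one]
    have h2 : coeff 0 (X * User ^ 2) = 0 := by
      rw [coeff_zero_eq_constantCoeff, map_mul, constantCoeff_X, zero_mul]
    have h3 : coeff 0 (X * Yser ^ 2) = 0 := by
      rw [coeff_zero_eq_constantCoeff, map_mul, constantCoeff_X, zero_mul]
    rw [map_add, map_add, h1, h2, h3, coeff_one, if_pos rfl]
    norm_num
  | succ n =>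
    rw [map_add, map_add, coeff_succ_X_mul, coeff_succ_X_mul, coeff_one,
      if_neg (Nat.succ_ne_zero n), zero_add, User, coeff_mk, LTree.cntU_succ]
    rw [sq, sq, PowerSeries.coeff_mul, PowerSeries.coeff_mul]
    push_cast
    rw [← sum_add_distrib]
    refine sum_congr rfl fun ij _ => ?_
    rw [coeff_mk, coeff_mk, coeff_Yser, coeff_Yser, LTree.cntF_eq_catalan, LTree.cntF_eq_catalan]

theorem Vser_eq : Yser * Wser = 1 + X * (Yser * Wser) ^ 2 + X * Yser ^ 2 := by
  linear_combination Yser * Wser_eq + Yser_eq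

theorem eq_of_quadratic {F G : ℚ⟦X⟧} (hF : F = 1 + X * F ^ 2 + X * Yser ^ 2)
    (hG : G = 1 + X * G ^ 2 + X * Yser ^ 2) : F = G := by
  have hD : (F - G) * (1 - X * (F + G)) = 0 := by linear_combination hF - hG
  rcases mul_eq_zero.1 hD with h | h
  · exact sub_eq_zero.1 h
  · exfalso
    have := congrArg (constantCoeff) h
    simp at this

theorem User_eq_YW : User = Yser * Wser := eq_of_quadratic User_eq Vser_eq

theorem coeff_Mser (n : ℕ) : coeff n Mser = (LTree.cntM n : ℚ) := by
  rw [Mser, coeff_mk, LTree.blCount_eq_cntM]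

theorem Mser_eq : Mser = 1 + X * Yser + X * ((Mser - 1) * User) := by
  ext n
  cases n with
  | zero =>
    have h1 : coeff 0 Mser = 1 := by rw [coeff_Mser, cntM_zero, Nat.cast_one]
    have h2 : coeff 0 (X * Yser) = 0 := by
      rw [coeff_zero_eq_constantCoeff, map_mul, constantCoeff_X, zero_mul]
    have h3 : coeff 0 (X * ((Mser - 1) * User)) = 0 := by
      rw [coeff_zero_eq_constantCoeff, map_mul, constantCoeff_X, zero_mul]
    rw [map_add, map_add, h1, h2, h3, coeff_one, if_pos rfl]
    norm_num
  | succ n =>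
    rw [map_add, map_add, coeff_succ_X_mul, coeff_succ_X_mul, coeff_one,
      if_neg (Nat.succ_ne_zero n), zero_add, coeff_Mser, LTree.cntM_succ, coeff_Yser,
      PowerSeries.coeff_mul]
    have hterm : ∀ ij ∈ antidiagonal n,
        coeff ij.1 (Mser - 1) * coeff ij.2 User =
          (if ij.1 = 0 then 0 else (LTree.cntM ij.1 : ℚ) * LTree.cntU ij.2) := by
      intro ij _
      rw [map_sub, coeff_Mser, coeff_one, User, coeff_mk]
      rcases Nat.eq_zero_or_pos ij.1 with h0 | hp
      · rw [if_pos h0, h0, if_pos rfl, cntM_zero]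
        norm_num
      · rw [if_neg (by omega), if_neg (by omega), sub_zero]
    rw [sum_congr rfl hterm]
    have hsplit : ∀ ij ∈ antidiagonal n,
        ((if ij.1 = 0 then (catalan ij.2 : ℚ) else (LTree.cntM ij.1 : ℚ) * LTree.cntU ij.2)) =
          (if ij.1 = 0 then (catalan ij.2 : ℚ) else 0) +
            (if ij.1 = 0 then 0 else (LTree.cntM ij.1 : ℚ) * LTree.cntU ij.2) := by
      intro ij _
      split_ifs <;> simp
    have hcast : ((∑ ij ∈ antidiagonal n,
        if ij.1 = 0 then LTree.cntF ij.2 else LTree.cntM ij.1 * LTree.cntU ij.2 : ℕ) : ℚ) =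
        ∑ ij ∈ antidiagonal n,
          (if ij.1 = 0 then (catalan ij.2 : ℚ) else (LTree.cntM ij.1 : ℚ) * LTree.cntU ij.2) := by
      push_cast
      refine sum_congr rfl fun ij _ => ?_
      split_ifs
      · rw [LTree.cntF_eq_catalan]
      · rfl
    rw [hcast, sum_congr rfl hsplit, sum_add_distrib]
    congr 1
    rw [Finset.Nat.sum_antidiagonal_eq_sum_range_succ
      (fun i j => if i = 0 then (catalan j : ℚ) else 0) n]
    rw [Finset.sum_range_succ' (fun k => if k = 0 then (catalan (n - k) : ℚ) else 0) n]
    simp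

theorem Mser'_eq : (1 + X * (Yser * Wser)) =
    1 + X * Yser + X * (((1 + X * (Yser * Wser)) - 1) * User) := by
  rw [User_eq_YW]
  linear_combination (X * Yser) * Wser_eq

theorem M_unique {F G : ℚ⟦X⟧} (hF : F = 1 + X * Yser + X * ((F - 1) * User))
    (hG : G = 1 + X * Yser + X * ((G - 1) * User)) : F = G := by
  have hD : (F - G) * (1 - X * User) = 0 := by linear_combination hF - hG
  rcases mul_eq_zero.1 hD with h | h
  · exact sub_eq_zero.1 h
  · exfalso
    have := congrArg (constantCoeff) h
    simp at this

theorem Mser_eq_W : Mser = 1 + X * (Yser * Wser) := M_unique Mser_eq Mser'_eq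

theorem MY_inv : Mser * Yser⁻¹ = 1 - X * Yser + X * Wser := by
  rw [Yser_inv, Mser_eq_W]
  linear_combination (X * Wser) * Yser_eq
theorem Bnum_succ (n : ℕ) : Bnum (n + 1) = wq n := by
  cases n with
  | zero => rw [wq_zero, Bnum]; norm_num
  | succ m =>
    rw [Bnum, if_neg (by omega), if_pos (by omega), wq]
    refine sum_congr rfl fun k hk => ?_
    rw [mem_range] at hk
    rw [cY_eq_fq]
    cases k with
    | zero => simp [fq]
    | succ j =>
      have hj : j ≤ m := by omega
      have e1 : 2 * (m + 2) - (j + 1) - 3 = 2 * m - j := by omega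
      have e2 : (m + 2) - (j + 1) - 1 = m - j := by omega
      have e3 : m + 1 - (j + 1) = m - j := by omega
      rw [e1, e2, e3, fq, if_neg (Nat.succ_ne_zero j)]
      have e4 : 2 * (m - j) + (j + 1) = 2 * m - j + 1 := by omega
      rw [e4]
      have hcast : ((2 * m - j).choose (m - j) : ℚ) * ((2 * m - j + 1 : ℕ) : ℚ) =
          ((2 * m - j + 1).choose (m - j) : ℚ) * ((m + 1 : ℕ) : ℚ) := by
        have h := Nat.choose_mul_succ_eq (2 * m - j) (m - j)
        have e5 : 2 * m - j + 1 - (m - j) = m + 1 := by omega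
        rw [e5] at h
        exact_mod_cast congrArg (Nat.cast : ℕ → ℚ) h
      have hms : ((m - j : ℕ) : ℚ) = (m : ℚ) - (j : ℚ) := by
        rw [Nat.cast_sub hj]
      have hms2 : ((2 * m - j : ℕ) : ℚ) = 2 * (m : ℚ) - (j : ℚ) := by
        rw [Nat.cast_sub (by omega)]
        push_cast
        ring
      have hms3 : ((2 * m - j + 1 : ℕ) : ℚ) = 2 * (m : ℚ) - (j : ℚ) + 1 := by
        push_cast [Nat.cast_sub (show j ≤ 2 * m by omega)]
        ring
      push_cast [hms]
      have d1 : ((m : ℚ) + 2) - 1 ≠ 0 := by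
        have : (0:ℚ) < (m:ℚ) + 1 := by positivity
        intro hcon
        nlinarith
      have d2 : 2 * ((m:ℚ) - (j:ℚ)) + ((j:ℚ) + 1) ≠ 0 := by
        have hjm : (j:ℚ) ≤ (m:ℚ) := by exact_mod_cast hj
        intro hcon
        nlinarith
      push_cast [hms3] at hcast
      field_simp
      linear_combination (catalan (j + 1) : ℚ) * hcast

/-- `M(q)/Y(q) = 1 + ∑_{n>0} (B_n - C_{n-1}) q^n`; in particular, if
`B_n ≥ C_{n-1}` for all `n ≥ 1` then `M(q)/Y(q)` has nonnegative coefficients. -/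
theorem Mser_div_Yser :
    Mser * Yser⁻¹ =
      PowerSeries.mk (fun n => if n = 0 then (1 : ℚ) else Bnum n - (catalan (n - 1) : ℚ)) ∧
    ((∀ n : ℕ, 1 ≤ n → (catalan (n - 1) : ℚ) ≤ Bnum n) →
      ∀ n : ℕ, 0 ≤ PowerSeries.coeff n (Mser * Yser⁻¹)) := by
  have hmain : Mser * Yser⁻¹ =
      PowerSeries.mk (fun n => if n = 0 then (1 : ℚ) else Bnum n - (catalan (n - 1) : ℚ)) := by
    rw [MY_inv]
    ext n
    cases n with
    | zero =>
      have h2 : coeff 0 (X * Yser) = 0 := by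
        rw [coeff_zero_eq_constantCoeff, map_mul, constantCoeff_X, zero_mul]
      have h3 : coeff 0 (X * Wser) = 0 := by
        rw [coeff_zero_eq_constantCoeff, map_mul, constantCoeff_X, zero_mul]
      rw [map_add, map_sub, h2, h3, coeff_one, coeff_mk, if_pos rfl, if_pos rfl]
      norm_num
    | succ n =>
      rw [map_add, map_sub, coeff_succ_X_mul, coeff_succ_X_mul, coeff_one,
        if_neg (Nat.succ_ne_zero n), coeff_mk, if_neg (Nat.succ_ne_zero n), coeff_Yser,
        Nat.add_sub_cancel, Bnum_succ, Wser, coeff_mk]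
      ring
  refine ⟨hmain, fun hB n => ?_⟩
  rw [hmain, coeff_mk]
  split_ifs with h
  · norm_num
  · exact sub_nonneg.2 (hB n (by omega))
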